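/- Expected Euler characteristic of the random exit set: Let G be a finite simple graph and f have i.i.d. uniform([-1,1]) values on V. Then for every vertex x, E[χ(S_f^-(x))] = Σ_{k≥0} (-1)^k V_k(x)/(k+2), where V_k(x) is the number of (k+1)-cliques in the subgraph induced by the neighbors of x. -/

import Mathlib

open Finset SimpleGraph MeasureTheory
open scoped Classical

noncomputable section

variable {V : Type*} [Fintype V] [DecidableEq V]

/-- Number of cliques on `k` vertices in `G`. -/
def cliqueCount (G : SimpleGraph V) (k : ℕ) : ℕ := (G.cliqueFinset k).card

/-- Number of cliques on `k` vertices contained in the unit sphere `S(x)`. -/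
def sphereCliques (G : SimpleGraph V) (x : V) (k : ℕ) : ℕ :=
  ((G.cliqueFinset k).filter fun s => s ⊆ G.neighborFinset x).card

/-- Number of `k`-vertex cliques in the exit set `S_f^-(x)`. -/
def minusCliques (G : SimpleGraph V) (f : V → ℝ) (x : V) (k : ℕ) : ℕ :=
  ((G.cliqueFinset k).filter fun s => s ⊆ G.neighborFinset x ∧ ∀ y ∈ s, f y < f x).card

/-- Number of `k`-vertex cliques in the entrance set `S_f^+(x)`. -/
def plusCliques (G : SimpleGraph V) (f : V → ℝ) (x : V) (k : ℕ) : ℕ :=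
  ((G.cliqueFinset k).filter fun s => s ⊆ G.neighborFinset x ∧ ∀ y ∈ s, f x < f y).card

/-- Number of `k`-vertex cliques in `S(x)` with vertices both below and above `f x`. -/
def mixedCliques (G : SimpleGraph V) (f : V → ℝ) (x : V) (k : ℕ) : ℕ :=
  ((G.cliqueFinset k).filter fun s =>
    s ⊆ G.neighborFinset x ∧ (∃ y ∈ s, f y < f x) ∧ (∃ z ∈ s, f x < f z)).card

/-- Euler characteristic `χ(G) = Σ_k (-1)^k v_k`. -/
def eulerChar (G : SimpleGraph V) : ℤ :=
  ∑ k ∈ Finset.range (Fintype.card V + 1), (-1 : ℤ) ^ k * cliqueCount G (k + 1)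

/-- Euler characteristic of the exit set `S_f^-(x)`. -/
def chiMinus (G : SimpleGraph V) (f : V → ℝ) (x : V) : ℤ :=
  ∑ k ∈ Finset.range (Fintype.card V + 1), (-1 : ℤ) ^ k * minusCliques G f x (k + 1)

/-- Poincaré–Hopf index `i_f(x) = 1 - χ(S_f^-(x))`. -/
def pindex (G : SimpleGraph V) (f : V → ℝ) (x : V) : ℤ := 1 - chiMinus G f x

/-- Symmetric index `j_f(x) = (i_f(x) + i_{-f}(x))/2`. -/
def symIndex (G : SimpleGraph V) (f : V → ℝ) (x : V) : ℚ :=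
  ((pindex G f x : ℚ) + (pindex G (-f) x : ℚ)) / 2

/-- Curvature `K(x) = Σ_k (-1)^k V_{k-1}(x)/(k+1)`. -/
def curvature (G : SimpleGraph V) (x : V) : ℚ :=
  ∑ k ∈ Finset.range (Fintype.card V + 1),
    (-1 : ℚ) ^ k * (sphereCliques G x k : ℚ) / (k + 1)

/-- The uniform probability measure on `[-1,1]`. -/
def unif : Measure ℝ := (2 : ENNReal)⁻¹ • volume.restrict (Set.Icc (-1 : ℝ) 1)

/-- The product measure on `V → ℝ` with i.i.d. uniform `[-1,1]` coordinates. -/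
def uniMeasure (V : Type*) [Fintype V] : Measure (V → ℝ) := Measure.pi fun _ => unif


instance : IsProbabilityMeasure unif := by
  constructor
  rw [unif]
  simp [Measure.restrict_apply, Real.volume_Icc]
  rw [show (1:ℝ) + 1 = 2 by norm_num, ENNReal.ofReal_ofNat]
  simp [ENNReal.inv_mul_cancel]

theorem unif_Iio (t : ℝ) (ht : t ∈ Set.Icc (-1:ℝ) 1) : unif (Set.Iio t) = ENNReal.ofReal ((t+1)/2) := by
  rw [unif]
  simp only [Measure.smul_apply, Measure.restrict_apply measurableSet_Iio, smul_eq_mul]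
  have : Set.Iio t ∩ Set.Icc (-1:ℝ) 1 = Set.Ico (-1) t := by
    ext u; simp only [Set.mem_inter_iff, Set.mem_Iio, Set.mem_Icc, Set.mem_Ico]
    constructor
    · rintro ⟨h1, h2, h3⟩; exact ⟨h2, h1⟩
    · rintro ⟨h1, h2⟩; exact ⟨h2, h1, h2.le.trans ht.2⟩
  rw [this, Real.volume_Ico, ← ENNReal.ofReal_ofNat 2, ← ENNReal.ofReal_inv_of_pos (by norm_num),
    ← ENNReal.ofReal_mul (by positivity)]
  ring_nf

theorem real_int (m : ℕ) : ∫ t in Set.Icc (-1:ℝ) 1, ((t+1)/2)^m = 2/(m+1) := by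
  rw [MeasureTheory.integral_Icc_eq_integral_Ioc,
    ← intervalIntegral.integral_of_le (by norm_num : (-1:ℝ) ≤ 1)]
  have h1 : ∫ t in (-1:ℝ)..1, ((t+1)/2)^m = ∫ t in (0:ℝ)..2, (t/2)^m := by
    have := intervalIntegral.integral_comp_add_right (a := (-1:ℝ)) (b := 1)
      (fun u => (u/2)^m) 1
    norm_num at this
    exact this
  rw [h1]
  have h2 := intervalIntegral.integral_comp_div (a := (0:ℝ)) (b := 2)
    (fun u => u^m) (by norm_num : (2:ℝ) ≠ 0)
  norm_num at h2
  rw [h2]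
  rw [eq_div_iff (by positivity : ((m:ℝ)+1) ≠ 0)]
  field_simp

theorem lint_pow (m : ℕ) : ∫⁻ t, (unif (Set.Iio t))^m ∂unif = ENNReal.ofReal (1/(m+1)) := by
  set g := fun t : ℝ => (unif (Set.Iio t))^m with hg
  have hsmul : ∫⁻ t, g t ∂unif = 2⁻¹ * ∫⁻ t in Set.Icc (-1:ℝ) 1, g t ∂volume := by
    rw [unif, lintegral_smul_measure, smul_eq_mul]
  rw [hsmul, hg]
  have hcong : ∫⁻ t in Set.Icc (-1:ℝ) 1, (unif (Set.Iio t))^m ∂volume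
      = ∫⁻ t in Set.Icc (-1:ℝ) 1, ENNReal.ofReal (((t+1)/2)^m) ∂volume := by
    apply setLIntegral_congr_fun measurableSet_Icc
    intro t ht
    simp only
    rw [unif_Iio t ht, ← ENNReal.ofReal_pow (by linarith [ht.1] : (0:ℝ) ≤ (t+1)/2)]
  rw [hcong, ← ofReal_integral_eq_lintegral_ofReal
      ((by fun_prop : Continuous fun t : ℝ => ((t+1)/2)^m).integrableOn_Icc)
      ((ae_restrict_iff' measurableSet_Icc).2 (Filter.Eventually.of_forall
        fun t ht => pow_nonneg (by linarith [ht.1] : (0:ℝ) ≤ (t+1)/2) m))]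
  rw [real_int m, ← ENNReal.ofReal_ofNat 2, ← ENNReal.ofReal_inv_of_pos (by norm_num),
      ← ENNReal.ofReal_mul (by norm_num)]
  congr 1
  rw [eq_div_iff (by positivity : ((m:ℝ)+1) ≠ 0)]
  field_simp

open scoped Classical in
theorem measure_exit {W : Type*} [Fintype W] [DecidableEq W] (x : W) (s : Finset W)
    (hx : x ∉ s) :
    (Measure.pi fun _ : W => unif) {f : W → ℝ | ∀ y ∈ s, f y < f x}
      = ENNReal.ofReal (1/(s.card+1)) := by
  letI : Fintype {y : W // y = x} := Subtype.fintype fun y => y = x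
  letI : Unique {y : W // y = x} := ⟨⟨⟨x, rfl⟩⟩, fun y => Subtype.ext y.2⟩
  set e₁ := MeasurableEquiv.piEquivPiSubtypeProd (fun _ : W => ℝ) (fun y => y = x) with he₁
  set e₂ := MeasurableEquiv.funUnique {y : W // y = x} ℝ with he₂
  have h1 := measurePreserving_piEquivPiSubtypeProd (fun _ : W => unif) (fun y => y = x)
  have h2 := (measurePreserving_funUnique unif {y : W // y = x}).prod
    (MeasurePreserving.id (Measure.pi fun _ : {y : W // ¬ y = x} => unif))
  have hfin : (Subtype.fintype fun y : W => y = x)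
      = (Unique.fintype : Fintype {y : W // y = x}) := Subsingleton.elim _ _
  rw [hfin] at h1
  have h := h2.comp h1
  set B : Set (ℝ × ({y : W // ¬ y = x} → ℝ)) :=
    {p | ∀ y : {y : W // ¬ y = x}, y.1 ∈ s → p.2 y < p.1} with hBdef
  have hB : MeasurableSet B := by
    have : B = ⋂ y : {y : W // ¬ y = x}, {p : ℝ × ({y : W // ¬ y = x} → ℝ) |
        y.1 ∈ s → p.2 y < p.1} := by
      ext p; simp [hBdef, Set.mem_iInter]
    rw [this]
    apply MeasurableSet.iInter
    intro y
    by_cases hy : y.1 ∈ s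
    · simp only [hy, forall_true_left]
      exact measurableSet_lt (by fun_prop) (by fun_prop)
    · simp [hy]
    
  have hpre : {f : W → ℝ | ∀ y ∈ s, f y < f x}
      = (Prod.map e₂ id ∘ e₁) ⁻¹' B := by
    ext f
    simp only [Set.mem_setOf_eq, Set.mem_preimage, Function.comp_apply, hBdef,
      he₁, he₂, MeasurableEquiv.piEquivPiSubtypeProd, MeasurableEquiv.funUnique,
      Prod.map, Equiv.piEquivPiSubtypeProd, Equiv.funUnique,
      MeasurableEquiv.piUnique, Equiv.piUnique, id_eq, MeasurableEquiv.coe_mk,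
      Equiv.coe_fn_mk, default]
    constructor
    · intro hf y hy
      exact hf y.1 hy
    · intro hf y hy
      exact hf ⟨y, fun h => hx (h ▸ hy)⟩ hy
  rw [hpre, h.measure_preimage hB.nullMeasurableSet]
  rw [Measure.prod_apply hB]
  have hsec : ∀ t : ℝ, (Prod.mk t ⁻¹' B) =
      Set.pi Set.univ (fun y : {y : W // ¬ y = x} => if y.1 ∈ s then Set.Iio t else Set.univ) := by
    intro t
    ext g
    simp only [Set.mem_preimage, hBdef, Set.mem_setOf_eq, Set.mem_pi, Set.mem_univ,
      forall_true_left]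
    refine forall_congr' fun y => ?_
    by_cases hy : y.1 ∈ s <;> simp [hy]
  have hcard : (Finset.univ.filter fun y : {y : W // ¬ y = x} => y.1 ∈ s).card = s.card := by
    apply Finset.card_bij (fun y _ => y.1)
    · intro a ha; simpa using (Finset.mem_filter.1 ha).2
    · intro a _ b _ hab; exact Subtype.ext hab
    · intro b hb; exact ⟨⟨b, fun h => hx (h ▸ hb)⟩, by simp [hb], rfl⟩
  have hmeas : ∀ t : ℝ, (Measure.pi fun _ : {y : W // ¬ y = x} => unif) (Prod.mk t ⁻¹' B)
      = (unif (Set.Iio t))^s.card := by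
    intro t
    rw [hsec t, Measure.pi_pi]
    rw [show (fun y : {y : W // ¬ y = x} => unif (if y.1 ∈ s then Set.Iio t else Set.univ))
        = fun y => if y.1 ∈ s then unif (Set.Iio t) else 1 from by
      funext y; by_cases hy : y.1 ∈ s <;> simp [hy]]
    rw [Finset.prod_ite, Finset.prod_const, Finset.prod_const_one, mul_one, hcard]
  simp only [hmeas]
  exact lint_pow s.card


instance uniMeasure_prob : IsProbabilityMeasure (uniMeasure V) := by
  rw [uniMeasure]; infer_instance

theorem expected_exit_euler_char (G : SimpleGraph V) (x : V) :
    (∫ f, (chiMinus G f x : ℝ) ∂(uniMeasure V)) =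
      ∑ k ∈ Finset.range (Fintype.card V + 1),
        (-1 : ℝ) ^ k * (sphereCliques G x (k + 1) : ℝ) / (k + 2) := by
  have hAmeas : ∀ s : Finset V, MeasurableSet {f : V → ℝ | ∀ y ∈ s, f y < f x} := by
    intro s
    have : {f : V → ℝ | ∀ y ∈ s, f y < f x} = ⋂ y ∈ (s : Set V), {f : V → ℝ | f y < f x} := by
      ext f; simp
    rw [this]
    exact MeasurableSet.biInter (Set.to_countable _) fun y _ =>
      measurableSet_lt (measurable_pi_apply y) (measurable_pi_apply x)
  have hint : ∀ s : Finset V,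
      Integrable (fun f : V → ℝ =>
        Set.indicator {g : V → ℝ | ∀ y ∈ s, g y < g x} (fun _ => (1:ℝ)) f) (uniMeasure V) := by
    intro s
    rw [integrable_indicator_iff (hAmeas s)]
    exact integrableOn_const (measure_lt_top _ _).ne
  have hrw : ∀ f : V → ℝ, (chiMinus G f x : ℝ) =
      ∑ k ∈ Finset.range (Fintype.card V + 1),
        ∑ s ∈ (G.cliqueFinset (k+1)).filter (fun s => s ⊆ G.neighborFinset x),
          (-1:ℝ)^k * Set.indicator {g : V → ℝ | ∀ y ∈ s, g y < g x} (fun _ => (1:ℝ)) f := by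
    intro f
    rw [chiMinus]
    push_cast
    refine Finset.sum_congr rfl fun k _ => ?_
    rw [← Finset.mul_sum]
    congr 1
    rw [minusCliques, ← Finset.filter_filter, Finset.card_filter]
    push_cast
    refine Finset.sum_congr rfl fun s _ => ?_
    rw [Set.indicator_apply]
    simp only [Set.mem_setOf_eq]
  simp_rw [hrw]
  rw [MeasureTheory.integral_finset_sum _ (fun k _ =>
    integrable_finset_sum _ (fun s _ => (hint s).const_mul _))]
  refine Finset.sum_congr rfl fun k _ => ?_
  rw [MeasureTheory.integral_finset_sum _ (fun s _ => (hint s).const_mul _)]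
  have hterm : ∀ s ∈ (G.cliqueFinset (k+1)).filter (fun s => s ⊆ G.neighborFinset x),
      (∫ f, (-1:ℝ)^k *
        Set.indicator {g : V → ℝ | ∀ y ∈ s, g y < g x} (fun _ => (1:ℝ)) f ∂(uniMeasure V))
      = (-1:ℝ)^k * (1/(k+2)) := by
    intro s hs
    rw [Finset.mem_filter, SimpleGraph.mem_cliqueFinset_iff] at hs
    have hxs : x ∉ s := fun hxs => G.loopless.irrefl x (by simpa using hs.2 hxs)
    have hcard : s.card = k + 1 := hs.1.card_eq
    rw [MeasureTheory.integral_const_mul, MeasureTheory.integral_indicator_const _ (hAmeas s)]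
    have : (uniMeasure V) {g : V → ℝ | ∀ y ∈ s, g y < g x}
        = ENNReal.ofReal (1/(s.card+1)) := by
      rw [uniMeasure]; exact measure_exit x s hxs
    rw [measureReal_def, this, smul_eq_mul, mul_one, ENNReal.toReal_ofReal (by positivity), hcard]
    push_cast
    norm_num
    ring
  rw [Finset.sum_congr rfl hterm, Finset.sum_const, sphereCliques, nsmul_eq_mul]
  ring

end
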